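/- For the parity-locked regime 0 < σ < 1 with J_k = 2^{kσ}J and J ≠ 0, the sequence P_k defined by P_k = [sinh(βJ_k) + P_{k-1}² cosh(βJ_k)]/[cosh(βJ_k) + P_{k-1}² sinh(βJ_k)], P_0 = tanh(βJ), converges to sgn(J) as k → ∞ for any fixed β > 0. -/

import Mathlib

/-- Height-dependent couplings J_k = 2^{kσ} J. -/
noncomputable def Jcoup (σ J : ℝ) (k : ℕ) : ℝ := (2:ℝ)^((k:ℝ)*σ) * J

/-- The width-symmetric parity recursion P_k, with P_0 = tanh(βJ). -/
noncomputable def Pseq (β σ J : ℝ) : ℕ → ℝ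
  | 0 => Real.tanh (β * J)
  | (k+1) =>
      (Real.sinh (β * Jcoup σ J (k+1)) +
          (Pseq β σ J k)^2 * Real.cosh (β * Jcoup σ J (k+1))) /
      (Real.cosh (β * Jcoup σ J (k+1)) +
          (Pseq β σ J k)^2 * Real.sinh (β * Jcoup σ J (k+1)))

open Filter Real

private lemma coshne (x : ℝ) : Real.cosh x ≠ 0 := (Real.cosh_pos x).ne'

/-- addition formula in the needed shape -/
lemma tanh_add_form (x y : ℝ) :
    (Real.sinh x + Real.tanh y * Real.cosh x) / (Real.cosh x + Real.tanh y * Real.sinh x)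
      = Real.tanh (x + y) := by
  have hn : Real.sinh x + Real.tanh y * Real.cosh x = Real.sinh (x+y) / Real.cosh y := by
    rw [Real.tanh_eq_sinh_div_cosh, Real.sinh_add]
    field_simp [coshne y]
  have hdn : Real.cosh x + Real.tanh y * Real.sinh x = Real.cosh (x+y) / Real.cosh y := by
    rw [Real.tanh_eq_sinh_div_cosh, Real.cosh_add]
    field_simp [coshne y]
  rw [hn, hdn, Real.tanh_eq_sinh_div_cosh, div_div_div_cancel_right₀ (coshne y)]

/-- tanh of ½ log cosh(2u) is tanh(u)². -/
lemma tanh_half_log_cosh (u : ℝ) :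
    Real.tanh (Real.log (Real.cosh (2*u)) / 2) = (Real.tanh u)^2 := by
  have hc : (0:ℝ) < Real.cosh (2*u) := Real.cosh_pos _
  set t := Real.log (Real.cosh (2*u)) / 2 with ht
  have he : Real.exp t * Real.exp t = Real.cosh (2*u) := by
    rw [← Real.exp_add]
    have : t + t = Real.log (Real.cosh (2*u)) := by rw [ht]; ring
    rw [this, Real.exp_log hc]
  have h2 : Real.cosh (2*u) = Real.cosh u ^ 2 + Real.sinh u ^ 2 := Real.cosh_two_mul u
  have hsq : Real.cosh u ^ 2 = Real.sinh u ^ 2 + 1 := Real.cosh_sq u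
  have hept : (0:ℝ) < Real.exp t := Real.exp_pos t
  rw [Real.tanh_eq_sinh_div_cosh, Real.tanh_eq_sinh_div_cosh, Real.sinh_eq, Real.cosh_eq,
    Real.exp_neg]
  rw [h2] at he
  field_simp
  nlinarith [he, hsq, hept]

lemma g_nonneg (u : ℝ) : 0 ≤ Real.log (Real.cosh (2*u)) / 2 :=
  div_nonneg (Real.log_nonneg (Real.one_le_cosh _)) (by norm_num)

lemma cosh_le_exp_abs (x : ℝ) : Real.cosh x ≤ Real.exp |x| := by
  rw [Real.cosh_eq]
  have h1 : Real.exp x ≤ Real.exp |x| := Real.exp_le_exp.2 (le_abs_self x)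
  have h2 : Real.exp (-x) ≤ Real.exp |x| := Real.exp_le_exp.2 (neg_le_abs x)
  linarith

lemma g_le_abs (u : ℝ) : Real.log (Real.cosh (2*u)) / 2 ≤ |u| := by
  have h1 : Real.cosh (2*u) ≤ Real.exp (2*|u|) := by
    have := cosh_le_exp_abs (2*u)
    rwa [abs_mul, abs_two] at this
  have h2 : Real.log (Real.cosh (2*u)) ≤ 2*|u| := by
    calc Real.log (Real.cosh (2*u)) ≤ Real.log (Real.exp (2*|u|)) :=
          Real.log_le_log (Real.cosh_pos _) h1
      _ = 2*|u| := Real.log_exp _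
  linarith

/-- auxiliary `arctanh`-type sequence -/
noncomputable def useq (β σ J : ℝ) : ℕ → ℝ
  | 0 => β * J
  | (k+1) => β * Jcoup σ J (k+1) + Real.log (Real.cosh (2 * useq β σ J k)) / 2

lemma Pseq_eq_tanh (β σ J : ℝ) : ∀ k, Pseq β σ J k = Real.tanh (useq β σ J k)
  | 0 => by simp [Pseq, useq]
  | (k+1) => by
      rw [show Pseq β σ J (k+1) =
        (Real.sinh (β * Jcoup σ J (k+1)) +
            (Pseq β σ J k)^2 * Real.cosh (β * Jcoup σ J (k+1))) /
        (Real.cosh (β * Jcoup σ J (k+1)) +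
            (Pseq β σ J k)^2 * Real.sinh (β * Jcoup σ J (k+1))) from rfl,
        Pseq_eq_tanh β σ J k,
        show useq β σ J (k+1) =
          β * Jcoup σ J (k+1) + Real.log (Real.cosh (2 * useq β σ J k)) / 2 from rfl,
        ← tanh_half_log_cosh (useq β σ J k)]
      exact tanh_add_form _ _

lemma tendsto_tanh_atTop : Tendsto Real.tanh atTop (nhds 1) := by
  have h : ∀ x : ℝ, Real.tanh x = (1 - Real.exp (-(2*x))) / (1 + Real.exp (-(2*x))) := by
    intro x
    have hx : (0:ℝ) < Real.exp x := Real.exp_pos x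
    have h2 : Real.exp (-(2*x)) = Real.exp (-x) / Real.exp x := by
      rw [← Real.exp_sub]; ring_nf
    have hd : (0:ℝ) < Real.exp x + Real.exp (-x) := by positivity
    have hA : (Real.exp x + Real.exp (-x)) / 2 ≠ 0 := by positivity
    have hB : (1:ℝ) + Real.exp (-x) / Real.exp x ≠ 0 := by positivity
    rw [Real.tanh_eq_sinh_div_cosh, Real.sinh_eq, Real.cosh_eq, h2,
      div_eq_div_iff hA hB, Real.exp_neg]
    field_simp
  have he : Tendsto (fun x : ℝ => Real.exp (-(2*x))) atTop (nhds 0) := by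
    apply Real.tendsto_exp_atBot.comp
    have h2 : Tendsto (fun x : ℝ => 2*x) atTop atTop :=
      Tendsto.const_mul_atTop (by norm_num) tendsto_id
    exact tendsto_neg_atTop_atBot.comp h2
  have : Tendsto (fun x : ℝ => (1 - Real.exp (-(2*x))) / (1 + Real.exp (-(2*x))))
      atTop (nhds ((1 - 0)/(1 + 0))) :=
    ((tendsto_const_nhds.sub he).div (tendsto_const_nhds.add he) (by norm_num))
  simp only [sub_zero, add_zero, div_one] at this
  exact this.congr (fun x => (h x).symm)

lemma tendsto_rpow_nat (σ : ℝ) (hσ : 0 < σ) :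
    Tendsto (fun k : ℕ => (2:ℝ) ^ ((k:ℝ) * σ)) atTop atTop := by
  have h : ∀ k : ℕ, (2:ℝ) ^ ((k:ℝ)*σ) = Real.exp ((Real.log 2 * σ) * (k:ℝ)) := by
    intro k
    rw [Real.rpow_def_of_pos (by norm_num : (0:ℝ) < 2)]
    ring_nf
  simp only [h]
  apply Real.tendsto_exp_atTop.comp
  exact Tendsto.const_mul_atTop
    (mul_pos (Real.log_pos (by norm_num)) hσ) tendsto_natCast_atTop_atTop

/-- in the parity-locked regime 0 < σ < 1 with J_k = 2^{kσ}J, J ≠ 0,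
the parity recursion converges to sgn(J) for any fixed β > 0. -/
theorem parity_locked_regime (β σ J : ℝ) (hβ : 0 < β) (hJ : J ≠ 0)
    (hσ0 : 0 < σ) (hσ1 : σ < 1) :
    Filter.Tendsto (Pseq β σ J) Filter.atTop (nhds (Real.sign J)) := by
  have hPu : ∀ k, Pseq β σ J k = Real.tanh (useq β σ J k) := Pseq_eq_tanh β σ J
  have hu1 : ∀ k : ℕ, useq β σ J (k+1) =
      β * J * (2:ℝ)^(((k:ℝ)+1)*σ) + Real.log (Real.cosh (2 * useq β σ J k)) / 2 := by
    intro k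
    show β * Jcoup σ J (k+1) + _ = _
    rw [Jcoup]
    push_cast
    ring_nf
  have hmono : ∀ k : ℕ, (2:ℝ)^((k:ℝ)*σ) ≤ (2:ℝ)^(((k:ℝ)+1)*σ) := by
    intro k
    apply Real.rpow_le_rpow_of_exponent_le (by norm_num)
    nlinarith
  have hL : ∀ k : ℕ, β * J * (2:ℝ)^((k:ℝ)*σ) ≤ useq β σ J k ∨ 0 < J := by
    intro k
    rcases lt_or_gt_of_ne hJ with hneg | hpos
    · left
      cases k with
      | zero => simp [useq]
      | succ k =>
          rw [hu1 k]
          push_cast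
          have := g_nonneg (useq β σ J k)
          linarith
    · right; exact hpos
  rcases lt_or_gt_of_ne hJ with hneg | hpos
  · -- J < 0 : limit is -1
    rw [Real.sign_of_neg hneg]
    have hβJ : β * J < 0 := mul_neg_of_pos_of_neg hβ hneg
    have hLB : ∀ k : ℕ, β * J * (2:ℝ)^((k:ℝ)*σ) ≤ useq β σ J k := by
      intro k
      rcases hL k with h | h
      · exact h
      · exact absurd h (not_lt.2 hneg.le)
    -- upper bound: u k ≤ 0
    have hU : ∀ k, useq β σ J k ≤ 0 := by
      intro k
      induction k with
      | zero =>
          show β * J ≤ 0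
          exact hβJ.le
      | succ k ih =>
          rw [hu1 k]
          have hg : Real.log (Real.cosh (2 * useq β σ J k)) / 2 ≤ -useq β σ J k := by
            have := g_le_abs (useq β σ J k)
            rwa [abs_of_nonpos ih] at this
          have h2 : -useq β σ J k ≤ -(β * J * (2:ℝ)^((k:ℝ)*σ)) := by linarith [hLB k]
          have h3 : β * J * (2:ℝ)^(((k:ℝ)+1)*σ) ≤ β * J * (2:ℝ)^((k:ℝ)*σ) := by
            have := hmono k
            nlinarith
          linarith
    -- decay
    have hD : ∀ k : ℕ, useq β σ J (k+1) ≤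
        β * J * ((2:ℝ)^(((k:ℝ)+1)*σ) - (2:ℝ)^((k:ℝ)*σ)) := by
      intro k
      rw [hu1 k]
      have hg : Real.log (Real.cosh (2 * useq β σ J k)) / 2 ≤ -useq β σ J k := by
        have := g_le_abs (useq β σ J k)
        rwa [abs_of_nonpos (hU k)] at this
      have h2 : -useq β σ J k ≤ -(β * J * (2:ℝ)^((k:ℝ)*σ)) := by linarith [hLB k]
      linarith
    -- the bound tends to -∞
    have hBt : Tendsto (fun k : ℕ =>
        β * J * ((2:ℝ)^(((k:ℝ)+1)*σ) - (2:ℝ)^((k:ℝ)*σ))) atTop atBot := by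
      have heq : ∀ k : ℕ, β * J * ((2:ℝ)^(((k:ℝ)+1)*σ) - (2:ℝ)^((k:ℝ)*σ))
          = (β * J * ((2:ℝ)^σ - 1)) * (2:ℝ)^((k:ℝ)*σ) := by
        intro k
        have : (2:ℝ)^(((k:ℝ)+1)*σ) = (2:ℝ)^((k:ℝ)*σ) * (2:ℝ)^σ := by
          rw [← Real.rpow_add (by norm_num : (0:ℝ) < 2)]
          ring_nf
        rw [this]; ring
      simp only [heq]
      apply Tendsto.const_mul_atTop_of_neg
      · have h1 : (1:ℝ) < (2:ℝ)^σ := by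
          have := Real.rpow_lt_rpow_of_exponent_lt (by norm_num : (1:ℝ) < 2) hσ0
          simpa using this
        nlinarith
      · exact tendsto_rpow_nat σ hσ0
    have hub : Tendsto (fun k : ℕ => useq β σ J (k+1)) atTop atBot :=
      tendsto_atBot_mono hD hBt
    have huBot : Tendsto (useq β σ J) atTop atBot :=
      (tendsto_add_atTop_iff_nat 1).1 hub
    have htanh : Tendsto (fun k => Real.tanh (useq β σ J k)) atTop (nhds (-1)) := by
      have h1 : Tendsto (fun k => Real.tanh (-(useq β σ J k))) atTop (nhds 1) :=
        tendsto_tanh_atTop.comp (tendsto_neg_atBot_atTop.comp huBot)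
      have h2 : Tendsto (fun k => -Real.tanh (-(useq β σ J k))) atTop (nhds (-1)) :=
        h1.neg
      refine h2.congr (fun k => ?_)
      rw [Real.tanh_neg, neg_neg]
    exact htanh.congr (fun k => (hPu k).symm)
  · -- J > 0 : limit is 1
    rw [Real.sign_of_pos hpos]
    have hβJ : 0 < β * J := mul_pos hβ hpos
    have hLb : ∀ k : ℕ, β * J * (2:ℝ)^(((k:ℝ)+1)*σ) ≤ useq β σ J (k+1) := by
      intro k
      rw [hu1 k]
      have := g_nonneg (useq β σ J k)
      linarith
    have hBt : Tendsto (fun k : ℕ => β * J * (2:ℝ)^(((k:ℝ)+1)*σ)) atTop atTop := by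
      apply Tendsto.const_mul_atTop hβJ
      have h := (tendsto_rpow_nat σ hσ0).comp (tendsto_add_atTop_nat 1)
      refine h.congr (fun k => ?_)
      simp only [Function.comp_apply]
      push_cast
      ring_nf
    have hub : Tendsto (fun k : ℕ => useq β σ J (k+1)) atTop atTop :=
      tendsto_atTop_mono hLb hBt
    have huTop : Tendsto (useq β σ J) atTop atTop :=
      (tendsto_add_atTop_iff_nat 1).1 hub
    have htanh : Tendsto (fun k => Real.tanh (useq β σ J k)) atTop (nhds 1) :=
      tendsto_tanh_atTop.comp huTop
    exact htanh.congr (fun k => (hPu k).symm)
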